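/- Let A ∈ ℝ^{m×m} be symmetric with rank(A) ≤ r_A and ‖A‖ ≤ 1, and suppose 𝓜 is (r+r_A+1, δ)-RIP with δ ∈ [0,1). Let X ∈ St(m,r) and let Θ ∈ ℝ^{r×r} be symmetric with ‖Θ‖ ≤ 2. Define the Euclidean gradients ∇_X f_∞ = (XΘXᵀ − A)XΘ, ∇_Θ f_∞ = (1/2)Xᵀ(XΘXᵀ − A)X, ∇_X f = [𝓜*𝓜(XΘXᵀ − A)]XΘ, ∇_Θ f = (1/2)Xᵀ[𝓜*𝓜(XΘXᵀ − A)]X, and for a matrix-valued gradient g at X the Riemannian gradient ∇ᴿ(g) = (I_m − XXᵀ)g + (X/2)(Xᵀg − gᵀX). Then ‖∇ᴿ(∇_X f_∞) − ∇ᴿ(∇_X f)‖_F ≤ 12mδ and ‖∇_Θ f_∞ − ∇_Θ f‖_F ≤ (3/2)mδ. -/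

import Mathlib

open Matrix MeasureTheory ProbabilityTheory BigOperators

noncomputable section

/-- Frobenius norm of a real matrix. -/
def frob {m n : ℕ} (M : Matrix (Fin m) (Fin n) ℝ) : ℝ :=
  Real.sqrt (∑ i, ∑ j, (M i j) ^ 2)

/-- Euclidean norm of a vector in `ℝⁿ`. -/
def vnorm {n : ℕ} (v : Fin n → ℝ) : ℝ :=
  Real.sqrt (∑ i, (v i) ^ 2)

/-- Spectral norm (operator 2-norm) of a real matrix. -/
def spec {m n : ℕ} (M : Matrix (Fin m) (Fin n) ℝ) : ℝ :=
  ‖LinearMap.toContinuousLinearMap (Matrix.toEuclideanLin M)‖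

theorem isHermitian_tmul {m n : ℕ} (M : Matrix (Fin m) (Fin n) ℝ) :
    (Mᵀ * M).IsHermitian := by
  simpa [Matrix.conjTranspose_eq_transpose_of_trivial] using
    Matrix.isHermitian_conjTranspose_mul_self M

theorem posSemidef_tmul {m n : ℕ} (M : Matrix (Fin m) (Fin n) ℝ) :
    (Mᵀ * M).PosSemidef := by
  simpa [Matrix.conjTranspose_eq_transpose_of_trivial] using
    Matrix.posSemidef_conjTranspose_mul_self M

/-- The `i`-th largest singular value (1-indexed) of a real matrix, i.e. the square root of the
`i`-th largest eigenvalue of `MᵀM`; junk value `0` when `i` is out of range. -/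
def svalue {m n : ℕ} (M : Matrix (Fin m) (Fin n) ℝ) (i : ℕ) : ℝ :=
  if h : 1 ≤ i ∧ i ≤ n then
    Real.sqrt ((isHermitian_tmul M).eigenvalues
      (Tuple.sort (isHermitian_tmul M).eigenvalues ⟨n - i, by omega⟩))
  else 0

/-- Membership in the Stiefel manifold `St(m,r)`. -/
def Stiefel {m r : ℕ} (X : Matrix (Fin m) (Fin r) ℝ) : Prop :=
  Xᵀ * X = 1

/-- The Loewner order on (symmetric) real matrices: `A ⪯ B`. -/
def loewnerLE {m : ℕ} (A B : Matrix (Fin m) (Fin m) ℝ) : Prop :=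
  (B - A).PosSemidef

/-- The positive semidefinite square root of a PSD matrix, as `Matrix.PosSemidef.sqrt` was
defined in older Mathlib. -/
def psdSqrt {r : ℕ} {S : Matrix (Fin r) (Fin r) ℝ} (h : S.PosSemidef) : Matrix (Fin r) (Fin r) ℝ :=
  h.1.eigenvectorUnitary.1 * diagonal ((↑) ∘ (Real.sqrt ∘ h.1.eigenvalues)) *
    (star h.1.eigenvectorUnitary : Matrix (Fin r) (Fin r) ℝ)

/-- The inverse of the positive semidefinite square root of a matrix (junk value `0` when the
matrix is not positive semidefinite). -/
def sqrtInv {r : ℕ} (S : Matrix (Fin r) (Fin r) ℝ) : Matrix (Fin r) (Fin r) ℝ :=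
  haveI := Classical.propDecidable S.PosSemidef
  if h : S.PosSemidef then (psdSqrt h)⁻¹ else 0

/-- The linear sensing map `𝓜` determined by feature matrices `M_i`:
`𝓜(B)_i = Tr(M_iᵀ B)`. -/
def calM {m n : ℕ} (Ms : Fin n → Matrix (Fin m) (Fin m) ℝ)
    (B : Matrix (Fin m) (Fin m) ℝ) : Fin n → ℝ :=
  fun i => ((Ms i)ᵀ * B).trace

/-- The adjoint `𝓜*` of the sensing map: `𝓜*(y) = ∑ i, y_i M_i`. -/
def calMadj {m n : ℕ} (Ms : Fin n → Matrix (Fin m) (Fin m) ℝ)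
    (y : Fin n → ℝ) : Matrix (Fin m) (Fin m) ℝ :=
  ∑ i, y i • Ms i

/-- `(𝓜*𝓜 − 𝓘)(B)`. -/
def calE {m n : ℕ} (Ms : Fin n → Matrix (Fin m) (Fin m) ℝ)
    (B : Matrix (Fin m) (Fin m) ℝ) : Matrix (Fin m) (Fin m) ℝ :=
  calMadj Ms (calM Ms B) - B

/-- The `(s, δ)`-restricted isometry property for the sensing map determined by `Ms`. -/
def IsRIP {m n : ℕ} (Ms : Fin n → Matrix (Fin m) (Fin m) ℝ) (s : ℕ) (δ : ℝ) : Prop :=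
  ∀ B : Matrix (Fin m) (Fin m) ℝ, B.IsSymm → B.rank ≤ s →
    (1 - δ) * frob B ^ 2 ≤ vnorm (calM Ms B) ^ 2 ∧
      vnorm (calM Ms B) ^ 2 ≤ (1 + δ) * frob B ^ 2

/-- The Riemannian gradient on the Stiefel manifold obtained from the Euclidean gradient `g`
at the point `X`. -/
def Rgrad {m r : ℕ} (X g : Matrix (Fin m) (Fin r) ℝ) : Matrix (Fin m) (Fin r) ℝ :=
  (1 - X * Xᵀ) * g + (2⁻¹ : ℝ) • (X * (Xᵀ * g - gᵀ * X))

/-- One step of Riemannian gradient descent (with `μ = 2`) for the weight-normalized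
matrix sensing problem. -/
def RGDstep {m r n : ℕ} (Ms : Fin n → Matrix (Fin m) (Fin m) ℝ)
    (A : Matrix (Fin m) (Fin m) ℝ) (η : ℝ)
    (p : Matrix (Fin m) (Fin r) ℝ × Matrix (Fin r) (Fin r) ℝ) :
    Matrix (Fin m) (Fin r) ℝ × Matrix (Fin r) (Fin r) ℝ :=
  let X := p.1
  let Θ := p.2
  let Gt := calMadj Ms (calM Ms (X * Θ * Xᵀ - A)) * X * Θ
  let G := Rgrad X Gt
  let X' := (X - η • G) * sqrtInv (1 + η ^ 2 • (Gᵀ * G))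
  let Θ' := X'ᵀ * A * X' - X'ᵀ * calE Ms (X' * Θ * X'ᵀ - A) * X'
  (X', Θ')

/-- The standard Gaussian ensemble on `m × r` real matrices (i.i.d. `N(0,1)` entries). -/
def gaussianEnsemble (m r : ℕ) : Measure (Fin m → Fin r → ℝ) :=
  Measure.pi fun _ : Fin m => Measure.pi fun _ : Fin r => gaussianReal 0 1


namespace Aux
lemma s2_nonneg {n : ℕ} (v : Fin n → ℝ) : 0 ≤ ∑ i, v i ^ 2 :=
  Finset.sum_nonneg fun _ _ => sq_nonneg _
lemma vnorm_sq {n : ℕ} (v : Fin n → ℝ) : vnorm v ^ 2 = ∑ i, v i ^ 2 :=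
  Real.sq_sqrt (s2_nonneg v)
lemma f2_nonneg {m n : ℕ} (M : Matrix (Fin m) (Fin n) ℝ) : 0 ≤ ∑ i, ∑ j, M i j ^ 2 :=
  Finset.sum_nonneg fun _ _ => s2_nonneg _
lemma frob_sq {m n : ℕ} (M : Matrix (Fin m) (Fin n) ℝ) :
    frob M ^ 2 = ∑ i, ∑ j, M i j ^ 2 := Real.sq_sqrt (f2_nonneg M)
lemma frob_nonneg {m n : ℕ} (M : Matrix (Fin m) (Fin n) ℝ) : 0 ≤ frob M := Real.sqrt_nonneg _
lemma frob_le_of_sq_le_sq {m n : ℕ} {M : Matrix (Fin m) (Fin n) ℝ} {c : ℝ}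
    (hc : 0 ≤ c) (h : ∑ i, ∑ j, M i j ^ 2 ≤ c ^ 2) : frob M ≤ c := by
  have := Real.sqrt_le_sqrt h
  rwa [Real.sqrt_sq hc] at this
lemma frob_eq_norm {m n : ℕ} (M : Matrix (Fin m) (Fin n) ℝ) :
    letI := Matrix.frobeniusNormedAddCommGroup (α := ℝ) (m := Fin m) (n := Fin n)
    frob M = ‖M‖ := by
  letI := Matrix.frobeniusNormedAddCommGroup (α := ℝ) (m := Fin m) (n := Fin n)
  rw [Matrix.frobenius_norm_def, frob]
  rw [Real.sqrt_eq_rpow]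
  norm_num
lemma frob_sub_le {m n : ℕ} (A B : Matrix (Fin m) (Fin n) ℝ) :
    frob (A - B) ≤ frob A + frob B := by
  letI := Matrix.frobeniusNormedAddCommGroup (α := ℝ) (m := Fin m) (n := Fin n)
  rw [frob_eq_norm, frob_eq_norm, frob_eq_norm]
  exact norm_sub_le _ _
lemma frob_add_le {m n : ℕ} (A B : Matrix (Fin m) (Fin n) ℝ) :
    frob (A + B) ≤ frob A + frob B := by
  letI := Matrix.frobeniusNormedAddCommGroup (α := ℝ) (m := Fin m) (n := Fin n)
  rw [frob_eq_norm, frob_eq_norm, frob_eq_norm]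
  exact norm_add_le _ _
lemma frob_smul {m n : ℕ} (c : ℝ) (A : Matrix (Fin m) (Fin n) ℝ) :
    frob (c • A) = |c| * frob A := by
  letI := Matrix.frobeniusNormedAddCommGroup (α := ℝ) (m := Fin m) (n := Fin n)
  letI := Matrix.frobeniusNormedSpace (R := ℝ) (α := ℝ) (m := Fin m) (n := Fin n)
  rw [frob_eq_norm, frob_eq_norm, norm_smul, Real.norm_eq_abs]
lemma frob_transpose {m n : ℕ} (A : Matrix (Fin m) (Fin n) ℝ) : frob Aᵀ = frob A := by
  rw [frob, frob, Finset.sum_comm]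
  rfl
lemma frob_neg {m n : ℕ} (A : Matrix (Fin m) (Fin n) ℝ) : frob (-A) = frob A := by
  letI := Matrix.frobeniusNormedAddCommGroup (α := ℝ) (m := Fin m) (n := Fin n)
  rw [frob_eq_norm, frob_eq_norm, norm_neg]
def OpB {m n : ℕ} (A : Matrix (Fin m) (Fin n) ℝ) (c : ℝ) : Prop :=
  ∀ v : Fin n → ℝ, ∑ i, (A *ᵥ v) i ^ 2 ≤ c ^ 2 * ∑ j, v j ^ 2
lemma s2_eq_dot {n : ℕ} (v : Fin n → ℝ) : ∑ i, v i ^ 2 = v ⬝ᵥ v := by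
  simp [dotProduct, sq]
lemma opB_of_spec {m n : ℕ} {A : Matrix (Fin m) (Fin n) ℝ} {c : ℝ}
    (hc : 0 ≤ c) (h : spec A ≤ c) : OpB A c := by
  intro v
  have key : ∀ x : EuclideanSpace ℝ (Fin n),
      ‖(LinearMap.toContinuousLinearMap (Matrix.toEuclideanLin A)) x‖ ≤ c * ‖x‖ := by
    intro x
    calc ‖(LinearMap.toContinuousLinearMap (Matrix.toEuclideanLin A)) x‖
        ≤ spec A * ‖x‖ := (LinearMap.toContinuousLinearMap (Matrix.toEuclideanLin A)).le_opNorm x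
      _ ≤ c * ‖x‖ := by gcongr
  have := key ((WithLp.equiv 2 (Fin n → ℝ)).symm v)
  rw [LinearMap.coe_toContinuousLinearMap'] at this
  rw [show (WithLp.equiv 2 (Fin n → ℝ)).symm v = WithLp.toLp 2 v from rfl,
    Matrix.toEuclideanLin_apply_piLp_toLp] at this
  rw [EuclideanSpace.norm_eq, EuclideanSpace.norm_eq] at this
  simp only [PiLp.toLp_apply, Real.norm_eq_abs, sq_abs] at this
  have h2 : (Real.sqrt (∑ i, (A *ᵥ v) i ^ 2))^2 ≤ (c * Real.sqrt (∑ i, v i ^ 2))^2 := by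
    apply pow_le_pow_left₀ (Real.sqrt_nonneg _) this
  rw [Real.sq_sqrt (Finset.sum_nonneg fun _ _ => sq_nonneg _)] at h2
  rw [mul_pow, Real.sq_sqrt (Finset.sum_nonneg fun _ _ => sq_nonneg _)] at h2
  exact h2
lemma dot_self_mulVec {m r : ℕ} (X : Matrix (Fin m) (Fin r) ℝ) (w : Fin r → ℝ) :
    (X *ᵥ w) ⬝ᵥ (X *ᵥ w) = w ⬝ᵥ ((Xᵀ * X) *ᵥ w) := by
  rw [← Matrix.mulVec_mulVec, Matrix.dotProduct_mulVec, ← Matrix.mulVec_transpose,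
    dotProduct_comm, Matrix.dotProduct_mulVec, ← Matrix.mulVec_transpose,
    dotProduct_comm]
lemma opB_stiefel {m r : ℕ} {X : Matrix (Fin m) (Fin r) ℝ} (hX : Xᵀ * X = 1) : OpB X 1 := by
  intro v
  rw [s2_eq_dot, s2_eq_dot, dot_self_mulVec, hX, Matrix.one_mulVec, one_pow, one_mul]
lemma opB_stiefel_t {m r : ℕ} {X : Matrix (Fin m) (Fin r) ℝ} (hX : Xᵀ * X = 1) : OpB Xᵀ 1 := by
  intro v
  set w := Xᵀ *ᵥ v with hw
  have h1 : (X *ᵥ w) ⬝ᵥ (X *ᵥ w) = w ⬝ᵥ w := by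
    rw [dot_self_mulVec, hX, Matrix.one_mulVec]
  have h2 : v ⬝ᵥ (X *ᵥ w) = w ⬝ᵥ w := by
    rw [Matrix.dotProduct_mulVec, ← Matrix.mulVec_transpose, ← hw]
  have h3 : (0:ℝ) ≤ (v - X *ᵥ w) ⬝ᵥ (v - X *ᵥ w) := by
    rw [← s2_eq_dot]; exact Finset.sum_nonneg fun _ _ => sq_nonneg _
  rw [sub_dotProduct, dotProduct_sub, dotProduct_sub] at h3
  rw [h1] at h3
  have h4 : (X *ᵥ w) ⬝ᵥ v = w ⬝ᵥ w := by rw [dotProduct_comm]; exact h2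
  rw [h2, h4] at h3
  rw [s2_eq_dot, s2_eq_dot, one_pow, one_mul]
  show w ⬝ᵥ w ≤ v ⬝ᵥ v
  linarith
lemma opB_proj {m r : ℕ} {X : Matrix (Fin m) (Fin r) ℝ} (hX : Xᵀ * X = 1) :
    OpB (1 - X * Xᵀ) 1 := by
  intro v
  set w := Xᵀ *ᵥ v with hw
  have h1 : (X *ᵥ w) ⬝ᵥ (X *ᵥ w) = w ⬝ᵥ w := by
    rw [dot_self_mulVec, hX, Matrix.one_mulVec]
  have h2 : v ⬝ᵥ (X *ᵥ w) = w ⬝ᵥ w := by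
    rw [Matrix.dotProduct_mulVec, ← Matrix.mulVec_transpose, ← hw]
  have h4 : (X *ᵥ w) ⬝ᵥ v = w ⬝ᵥ w := by rw [dotProduct_comm]; exact h2
  have hv : (1 - X * Xᵀ) *ᵥ v = v - X *ᵥ w := by
    rw [Matrix.sub_mulVec, Matrix.one_mulVec, hw, ← Matrix.mulVec_mulVec]
  rw [s2_eq_dot, s2_eq_dot, hv, one_pow, one_mul]
  rw [sub_dotProduct, dotProduct_sub, dotProduct_sub, h1, h2, h4]
  have hww : (0:ℝ) ≤ w ⬝ᵥ w := by rw [← s2_eq_dot]; exact Finset.sum_nonneg fun _ _ => sq_nonneg _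
  linarith
lemma opB_neg {m n : ℕ} {A : Matrix (Fin m) (Fin n) ℝ} {c : ℝ} (h : OpB A c) : OpB (-A) c := by
  intro v
  have := h v
  simpa [Matrix.neg_mulVec] using this
lemma frob_mul_le {m n p : ℕ} {A : Matrix (Fin m) (Fin n) ℝ} {c : ℝ}
    (B : Matrix (Fin n) (Fin p) ℝ) (hc : 0 ≤ c) (h : OpB A c) :
    frob (A * B) ≤ c * frob B := by
  have key : ∑ i, ∑ j, (A * B) i j ^ 2 ≤ c ^ 2 * ∑ i, ∑ j, B i j ^ 2 := by
    rw [Finset.sum_comm, Finset.sum_comm (s := Finset.univ) (t := Finset.univ) (f := fun i j => B i j ^ 2)]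
    rw [Finset.mul_sum]
    apply Finset.sum_le_sum
    intro j _
    have : ∀ i, (A * B) i j = (A *ᵥ (fun k => B k j)) i := by
      intro i; simp [Matrix.mul_apply, Matrix.mulVec, dotProduct]
    calc ∑ i, (A * B) i j ^ 2 = ∑ i, (A *ᵥ (fun k => B k j)) i ^ 2 := by
          refine Finset.sum_congr rfl fun i _ => by rw [this i]
      _ ≤ c ^ 2 * ∑ k, (B k j) ^ 2 := h _
  calc frob (A * B) ≤ Real.sqrt (c ^ 2 * ∑ i, ∑ j, B i j ^ 2) := Real.sqrt_le_sqrt key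
    _ = c * frob B := by rw [Real.sqrt_mul (sq_nonneg c), Real.sqrt_sq hc]; rfl
lemma frob_le_of_opB {m n : ℕ} {A : Matrix (Fin m) (Fin n) ℝ} {c : ℝ}
    (hc : 0 ≤ c) (h : OpB A c) : frob A ≤ c * Real.sqrt n := by
  have key : ∑ i, ∑ j, A i j ^ 2 ≤ c ^ 2 * n := by
    rw [Finset.sum_comm]
    calc ∑ j, ∑ i, A i j ^ 2 = ∑ j : Fin n, ∑ i, (A *ᵥ Pi.single j (1:ℝ)) i ^ 2 := by
          refine Finset.sum_congr rfl fun j _ => Finset.sum_congr rfl fun i _ => ?_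
          rw [Matrix.mulVec_single_one]; rfl
      _ ≤ ∑ j : Fin n, c ^ 2 * ∑ k, (Pi.single j (1:ℝ)) k ^ 2 := Finset.sum_le_sum fun j _ => h _
      _ = c ^ 2 * n := by
          have : ∀ j : Fin n, ∑ k : Fin n, (Pi.single j (1:ℝ)) k ^ 2 = (1:ℝ) := by
            intro j
            rw [Finset.sum_eq_single j] <;> simp [Pi.single_apply]
          simp [this, Finset.mul_sum, mul_comm]
  have h2 : frob A ≤ Real.sqrt (c ^2 * n) := by
    rw [frob]; exact Real.sqrt_le_sqrt key
  calc frob A ≤ Real.sqrt (c^2 * n) := h2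
    _ = c * Real.sqrt n := by rw [Real.sqrt_mul (sq_nonneg c), Real.sqrt_sq hc]
lemma dot_nonneg {n : ℕ} (v : Fin n → ℝ) : 0 ≤ v ⬝ᵥ v := by
  rw [← s2_eq_dot]; exact Finset.sum_nonneg fun _ _ => sq_nonneg _
lemma rayleigh {m : ℕ} {E : Matrix (Fin m) (Fin m) ℝ} {c : ℝ} (hE : Eᵀ = E) (hc : 0 ≤ c)
    (h : ∀ v : Fin m → ℝ, |v ⬝ᵥ (E *ᵥ v)| ≤ c * (v ⬝ᵥ v)) : OpB E c := by
  have symm : ∀ u v : Fin m → ℝ, v ⬝ᵥ (E *ᵥ u) = u ⬝ᵥ (E *ᵥ v) := by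
    intro u v
    rw [Matrix.dotProduct_mulVec, ← Matrix.mulVec_transpose, hE, dotProduct_comm]
  have bil : ∀ u v : Fin m → ℝ, |u ⬝ᵥ (E *ᵥ v)| ≤ c / 2 * (u ⬝ᵥ u + v ⬝ᵥ v) := by
    intro u v
    have hq : (u + v) ⬝ᵥ (E *ᵥ (u + v)) - (u - v) ⬝ᵥ (E *ᵥ (u - v)) = 4 * (u ⬝ᵥ (E *ᵥ v)) := by
      rw [Matrix.mulVec_add, Matrix.mulVec_sub]
      rw [add_dotProduct, sub_dotProduct, dotProduct_add,
        dotProduct_add, dotProduct_sub, dotProduct_sub]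
      rw [symm u v]
      ring
    have h1 := h (u + v)
    have h2 := h (u - v)
    have e1 : (u + v) ⬝ᵥ (u + v) = u ⬝ᵥ u + 2 * (u ⬝ᵥ v) + v ⬝ᵥ v := by
      rw [add_dotProduct, dotProduct_add, dotProduct_add,
        dotProduct_comm v u]; ring
    have e2 : (u - v) ⬝ᵥ (u - v) = u ⬝ᵥ u - 2 * (u ⬝ᵥ v) + v ⬝ᵥ v := by
      rw [sub_dotProduct, dotProduct_sub, dotProduct_sub,
        dotProduct_comm v u]; ring
    have habs : |4 * (u ⬝ᵥ (E *ᵥ v))| ≤ c * ((u+v) ⬝ᵥ (u+v)) + c * ((u-v) ⬝ᵥ (u-v)) := by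
      rw [← hq]
      calc |(u + v) ⬝ᵥ (E *ᵥ (u + v)) - (u - v) ⬝ᵥ (E *ᵥ (u - v))|
          ≤ |(u + v) ⬝ᵥ (E *ᵥ (u + v))| + |(u - v) ⬝ᵥ (E *ᵥ (u - v))| := abs_sub _ _
        _ ≤ c * ((u+v) ⬝ᵥ (u+v)) + c * ((u-v) ⬝ᵥ (u-v)) := add_le_add h1 h2
    rw [e1, e2] at habs
    rw [abs_mul, abs_of_nonneg (by norm_num : (0:ℝ) ≤ 4)] at habs
    nlinarith [abs_nonneg (u ⬝ᵥ (E *ᵥ v))]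
  intro v
  rw [s2_eq_dot, s2_eq_dot]
  set w := E *ᵥ v with hw
  set a := w ⬝ᵥ w with ha
  set b := v ⬝ᵥ v with hb
  have ha0 : 0 ≤ a := dot_nonneg w
  have hb0 : 0 ≤ b := dot_nonneg v
  rcases eq_or_lt_of_le ha0 with haz | hap
  
  · rw [← haz]; positivity
  rcases eq_or_lt_of_le hb0 with hbz | hbp
  · exfalso
    have hv0 : v = 0 := by
      have : ∑ i, v i ^ 2 = 0 := by rw [s2_eq_dot, ← hb, ← hbz]
      funext i
      have := (Finset.sum_eq_zero_iff_of_nonneg (fun i _ => sq_nonneg (v i))).mp this i (Finset.mem_univ i)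
      exact pow_eq_zero_iff (by norm_num) |>.mp this
    rw [hv0] at hw
    simp [Matrix.mulVec_zero] at hw
    rw [hw] at ha
    simp at ha
    rw [← ha] at hap
    exact lt_irrefl _ hap
  -- main case
  set t := Real.sqrt b / Real.sqrt a with ht
  have hsa : (0:ℝ) < Real.sqrt a := Real.sqrt_pos.mpr hap
  have hsb : (0:ℝ) < Real.sqrt b := Real.sqrt_pos.mpr hbp
  have htp : 0 < t := div_pos hsb hsa
  have key := bil (t • w) v
  have e3 : (t • w) ⬝ᵥ (E *ᵥ v) = t * a := by
    rw [smul_dotProduct, ← hw, ← ha]; rfl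
  have e4 : (t • w) ⬝ᵥ (t • w) = t ^ 2 * a := by
    rw [smul_dotProduct, dotProduct_smul, ← ha]
    simp [smul_eq_mul]; ring
  rw [e3, e4] at key
  have e5 : t ^ 2 * a = b := by
    rw [ht, div_pow, Real.sq_sqrt hb0, Real.sq_sqrt ha0]
    field_simp
  rw [e5] at key
  have e6 : t * a = Real.sqrt a * Real.sqrt b := by
    rw [ht]
    rw [div_mul_eq_mul_div, mul_comm]
    have := Real.mul_self_sqrt ha0
    field_simp
    nlinarith [this]
  rw [e6] at key
  -- key : |√a * √b| ≤ c/2 * (b + b)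
  have key2 : Real.sqrt a * Real.sqrt b ≤ c * b := by
    calc Real.sqrt a * Real.sqrt b ≤ |Real.sqrt a * Real.sqrt b| := le_abs_self _
      _ ≤ c / 2 * (b + b) := key
      _ = c * b := by ring
  have key3 : Real.sqrt a ≤ c * Real.sqrt b := by
    have h1 : Real.sqrt b * Real.sqrt b = b := Real.mul_self_sqrt hb0
    nlinarith [key2, hsb]
  calc a = Real.sqrt a ^ 2 := (Real.sq_sqrt ha0).symm
    _ ≤ (c * Real.sqrt b) ^ 2 := by
        apply pow_le_pow_left₀ hsa.le key3
    _ = c ^ 2 * b := by rw [mul_pow, Real.sq_sqrt hb0]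
lemma rank_add_le' {m : ℕ} (A B : Matrix (Fin m) (Fin m) ℝ) :
    (A + B).rank ≤ A.rank + B.rank := by
  have hr : LinearMap.range (A + B).mulVecLin ≤
      LinearMap.range A.mulVecLin ⊔ LinearMap.range B.mulVecLin := by
    rintro x ⟨v, rfl⟩
    have : (A + B).mulVecLin v = A.mulVecLin v + B.mulVecLin v := by
      simp [Matrix.mulVecLin_apply, Matrix.add_mulVec]
    rw [this]
    exact Submodule.add_mem_sup (LinearMap.mem_range_self _ v) (LinearMap.mem_range_self _ v)
  calc (A + B).rank ≤ Module.finrank ℝ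
        ↥(LinearMap.range A.mulVecLin ⊔ LinearMap.range B.mulVecLin) :=
        Submodule.finrank_mono hr
    _ ≤ A.rank + B.rank := Submodule.finrank_add_le_finrank_add_finrank _ _
lemma rank_neg_le {m : ℕ} (A : Matrix (Fin m) (Fin m) ℝ) : (-A).rank ≤ A.rank := by
  have hr : LinearMap.range (-A).mulVecLin ≤ LinearMap.range A.mulVecLin := by
    rintro x ⟨v, rfl⟩
    refine ⟨-v, ?_⟩
    simp [Matrix.mulVecLin_apply, Matrix.neg_mulVec, Matrix.mulVec_neg]
  exact Submodule.finrank_mono hr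
lemma rank_vvt_le {m : ℕ} (u v : Fin m → ℝ) : (Matrix.vecMulVec u v).rank ≤ 1 := by
  rw [Matrix.vecMulVec_eq (Fin 1)]
  calc (Matrix.replicateCol (Fin 1) u * Matrix.replicateRow (Fin 1) v).rank
      ≤ (Matrix.replicateRow (Fin 1) v).rank := Matrix.rank_mul_le_right _ _
    _ ≤ 1 := by
        have := Matrix.rank_le_card_height (Matrix.replicateRow (Fin 1) v)
        simpa using this
lemma sum2_expand {m : ℕ} (P Q : Matrix (Fin m) (Fin m) ℝ) :
    ∑ i, ∑ j, (P i j + Q i j) ^ 2 =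
      (∑ i, ∑ j, P i j ^ 2) + 2 * (∑ i, ∑ j, P i j * Q i j) + ∑ i, ∑ j, Q i j ^ 2 := by
  simp [add_sq, Finset.sum_add_distrib, Finset.mul_sum, mul_assoc]
lemma sum2_expand_sub {m : ℕ} (P Q : Matrix (Fin m) (Fin m) ℝ) :
    ∑ i, ∑ j, (P i j - Q i j) ^ 2 =
      (∑ i, ∑ j, P i j ^ 2) - 2 * (∑ i, ∑ j, P i j * Q i j) + ∑ i, ∑ j, Q i j ^ 2 := by
  simp [sub_sq, Finset.sum_add_distrib, Finset.sum_sub_distrib, Finset.mul_sum, mul_assoc]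
lemma vsum2_expand {n : ℕ} (y z : Fin n → ℝ) :
    ∑ k, (y k + z k) ^ 2 = (∑ k, y k ^ 2) + 2 * (∑ k, y k * z k) + ∑ k, z k ^ 2 := by
  simp [add_sq, Finset.sum_add_distrib, Finset.mul_sum, mul_assoc]
lemma vsum2_expand_sub {n : ℕ} (y z : Fin n → ℝ) :
    ∑ k, (y k - z k) ^ 2 = (∑ k, y k ^ 2) - 2 * (∑ k, y k * z k) + ∑ k, z k ^ 2 := by
  simp [sub_sq, Finset.sum_add_distrib, Finset.sum_sub_distrib, Finset.mul_sum, mul_assoc]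
lemma calM_apply' {m n : ℕ} (Ms : Fin n → Matrix (Fin m) (Fin m) ℝ)
    (B : Matrix (Fin m) (Fin m) ℝ) (k : Fin n) :
    calM Ms B k = ∑ i, ∑ j, Ms k i j * B i j := by
  rw [calM, Matrix.trace, Finset.sum_comm]
  simp [Matrix.diag, Matrix.mul_apply, Matrix.transpose_apply]
lemma calM_add {m n : ℕ} (Ms : Fin n → Matrix (Fin m) (Fin m) ℝ)
    (B C : Matrix (Fin m) (Fin m) ℝ) (k : Fin n) :
    calM Ms (B + C) k = calM Ms B k + calM Ms C k := by
  simp [calM_apply', Matrix.add_apply, mul_add, Finset.sum_add_distrib]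
lemma calM_sub {m n : ℕ} (Ms : Fin n → Matrix (Fin m) (Fin m) ℝ)
    (B C : Matrix (Fin m) (Fin m) ℝ) (k : Fin n) :
    calM Ms (B - C) k = calM Ms B k - calM Ms C k := by
  simp [calM_apply', Matrix.sub_apply, mul_sub, Finset.sum_sub_distrib]
lemma adj_inner {m n : ℕ} (Ms : Fin n → Matrix (Fin m) (Fin m) ℝ)
    (y : Fin n → ℝ) (C : Matrix (Fin m) (Fin m) ℝ) :
    ∑ i, ∑ j, (calMadj Ms y) i j * C i j = ∑ k, y k * calM Ms C k := by
  simp only [calMadj, Matrix.sum_apply, Matrix.smul_apply, smul_eq_mul, Finset.sum_mul,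
    calM_apply']
  calc ∑ i, ∑ j, ∑ k, y k * Ms k i j * C i j
      = ∑ i, ∑ k, ∑ j, y k * Ms k i j * C i j :=
        Finset.sum_congr rfl (fun i _ => Finset.sum_comm)
    _ = ∑ k, ∑ i, ∑ j, y k * Ms k i j * C i j := Finset.sum_comm
    _ = ∑ k, y k * ∑ i, ∑ j, Ms k i j * C i j := by
        refine Finset.sum_congr rfl fun k _ => ?_
        rw [Finset.mul_sum]
        refine Finset.sum_congr rfl fun i _ => ?_
        rw [Finset.mul_sum]
        exact Finset.sum_congr rfl fun j _ => by ring
lemma quad_eq {m : ℕ} (M : Matrix (Fin m) (Fin m) ℝ) (v : Fin m → ℝ) :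
    v ⬝ᵥ (M *ᵥ v) = ∑ i, ∑ j, M i j * (v i * v j) := by
  simp only [dotProduct, Matrix.mulVec, dotProduct, Finset.mul_sum]
  refine Finset.sum_congr rfl fun i _ => ?_
  exact Finset.sum_congr rfl fun j _ => by ring
lemma frob_sq' {m n : ℕ} (M : Matrix (Fin m) (Fin n) ℝ) :
    frob M ^ 2 = ∑ i, ∑ j, M i j ^ 2 :=
  Real.sq_sqrt (Finset.sum_nonneg fun _ _ => Finset.sum_nonneg fun _ _ => sq_nonneg _)
lemma vnorm_sq' {n : ℕ} (v : Fin n → ℝ) : vnorm v ^ 2 = ∑ i, v i ^ 2 :=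
  Real.sq_sqrt (Finset.sum_nonneg fun _ _ => sq_nonneg _)
lemma rip_quad_bound {m n s : ℕ} {Ms : Fin n → Matrix (Fin m) (Fin m) ℝ} {δ : ℝ}
    (hδ0 : 0 ≤ δ) (hRIP : IsRIP Ms s δ) (D : Matrix (Fin m) (Fin m) ℝ)
    (hDsym : D.IsSymm) (hDrank : D.rank + 1 ≤ s) (v : Fin m → ℝ) :
    |v ⬝ᵥ ((calMadj Ms (calM Ms D) - D) *ᵥ v)| ≤ (δ * frob D) * (v ⬝ᵥ v) := by
  set t := frob D with htdef
  have ht0 : 0 ≤ t := by rw [htdef]; unfold frob; exact Real.sqrt_nonneg _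
  set b := v ⬝ᵥ v with hbdef
  have hb0 : 0 ≤ b := dot_nonneg v
  -- quadratic form identity
  have quad : v ⬝ᵥ ((calMadj Ms (calM Ms D) - D) *ᵥ v) =
      (∑ k, calM Ms D k * calM Ms (Matrix.vecMulVec v v) k) -
        ∑ i, ∑ j, D i j * (v i * v j) := by
    rw [quad_eq]
    have e1 : ∑ i, ∑ j, (calMadj Ms (calM Ms D) - D) i j * (v i * v j) =
        (∑ i, ∑ j, (calMadj Ms (calM Ms D)) i j * (Matrix.vecMulVec v v) i j) -
          ∑ i, ∑ j, D i j * (v i * v j) := by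
      simp only [Matrix.sub_apply, sub_mul, Finset.sum_sub_distrib, Matrix.vecMulVec_apply]
    rw [e1, adj_inner]
  rcases eq_or_lt_of_le ht0 with htz | htp
  · -- frob D = 0 : D = 0
    have hD0 : D = 0 := by
      have h2 : ∑ i, ∑ j, D i j ^ 2 = 0 := by
        have := frob_sq' D
        rw [← htdef, ← htz] at this
        linarith [this]
      ext i j
      have hrow := (Finset.sum_eq_zero_iff_of_nonneg
        (fun i _ => Finset.sum_nonneg fun j _ => sq_nonneg (D i j))).mp h2 i (Finset.mem_univ i)
      have := (Finset.sum_eq_zero_iff_of_nonneg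
        (fun j _ => sq_nonneg (D i j))).mp hrow j (Finset.mem_univ j)
      simpa using pow_eq_zero_iff (two_ne_zero) |>.mp this
    rw [quad, hD0]
    simp only [Matrix.zero_apply, zero_mul, Finset.sum_const_zero, sub_zero]
    have : calM Ms (0 : Matrix (Fin m) (Fin m) ℝ) = 0 := by
      funext k; simp [calM_apply']
    rw [this]
    simp only [Pi.zero_apply, zero_mul, Finset.sum_const_zero, abs_zero, sub_zero]
    positivity
  rcases eq_or_lt_of_le hb0 with hbz | hbp
  · -- v = 0
    have hv0 : v = 0 := by
      have h2 : ∑ i, v i ^ 2 = 0 := by rw [s2_eq_dot, ← hbdef, ← hbz]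
      
      funext i
      have := (Finset.sum_eq_zero_iff_of_nonneg
        (fun i _ => sq_nonneg (v i))).mp h2 i (Finset.mem_univ i)
      simpa using pow_eq_zero_iff (two_ne_zero) |>.mp this
    rw [hv0]
    simp only [Matrix.mulVec_zero, dotProduct_zero, zero_dotProduct, abs_zero]
    positivity
  -- main case
  set c : ℝ := t / b with hcdef
  have hcp : 0 < c := div_pos htp hbp
  set C : Matrix (Fin m) (Fin m) ℝ := Matrix.vecMulVec (c • v) v with hCdef
  have hCapp : ∀ i j, C i j = c * (v i * v j) := by
    intro i j
    rw [hCdef, Matrix.vecMulVec_apply]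
    simp [smul_eq_mul]; ring
  have hCsym : C.IsSymm := by
    ext i j
    rw [Matrix.transpose_apply, hCapp, hCapp]; ring
  have hCrank : C.rank ≤ 1 := rank_vvt_le _ _
  have hCfrob : ∑ i, ∑ j, C i j ^ 2 = t ^ 2 := by
    have hb2 : ∑ i, v i ^ 2 = b := by rw [s2_eq_dot, ← hbdef]
    have : ∑ i, ∑ j, C i j ^ 2 = c ^ 2 * ((∑ i, v i ^ 2) * (∑ j, v j ^ 2)) := by
      rw [Finset.sum_mul_sum, Finset.mul_sum]
      refine Finset.sum_congr rfl fun i _ => ?_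
      rw [Finset.mul_sum]
      refine Finset.sum_congr rfl fun j _ => ?_
      rw [hCapp]; ring
    rw [this, hb2, hcdef]
    field_simp
  have hDfrob : ∑ i, ∑ j, D i j ^ 2 = t ^ 2 := by rw [← frob_sq', htdef]
  -- apply RIP to D + C and D - C
  have hsym1 : (D + C).IsSymm := by
    ext i j
    rw [Matrix.transpose_apply, Matrix.add_apply, Matrix.add_apply]
    rw [← Matrix.transpose_apply D j i, hDsym, ← Matrix.transpose_apply C j i, hCsym]
  have hsym2 : (D - C).IsSymm := by
    ext i j
    rw [Matrix.transpose_apply, Matrix.sub_apply, Matrix.sub_apply]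
    rw [← Matrix.transpose_apply D j i, hDsym, ← Matrix.transpose_apply C j i, hCsym]
  have hrank1 : (D + C).rank ≤ s := by
    calc (D + C).rank ≤ D.rank + C.rank := rank_add_le' _ _
      _ ≤ D.rank + 1 := by omega
      _ ≤ s := hDrank
  have hrank2 : (D - C).rank ≤ s := by
    rw [sub_eq_add_neg]
    calc (D + (-C)).rank ≤ D.rank + (-C).rank := rank_add_le' _ _
      _ ≤ D.rank + C.rank := by
          have := rank_neg_le C; omega
      _ ≤ D.rank + 1 := by omega
      _ ≤ s := hDrank
  obtain ⟨hlo1, hhi1⟩ := hRIP (D + C) hsym1 hrank1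
  obtain ⟨hlo2, hhi2⟩ := hRIP (D - C) hsym2 hrank2
  -- expansions
  have efrob1 : frob (D + C) ^ 2 = t ^ 2 + 2 * (∑ i, ∑ j, D i j * C i j) + t ^ 2 := by
    rw [frob_sq']
    have : ∀ i j, (D + C) i j = D i j + C i j := fun i j => rfl
    simp only [this]
    rw [sum2_expand, hDfrob, hCfrob]
  have efrob2 : frob (D - C) ^ 2 = t ^ 2 - 2 * (∑ i, ∑ j, D i j * C i j) + t ^ 2 := by
    rw [frob_sq']
    have : ∀ i j, (D - C) i j = D i j - C i j := fun i j => rfl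
    simp only [this]
    rw [sum2_expand_sub, hDfrob, hCfrob]
  have ecal1 : vnorm (calM Ms (D + C)) ^ 2 =
      (∑ k, calM Ms D k ^ 2) + 2 * (∑ k, calM Ms D k * calM Ms C k) + ∑ k, calM Ms C k ^ 2 := by
    rw [vnorm_sq']
    simp only [calM_add]
    rw [vsum2_expand]
  have ecal2 : vnorm (calM Ms (D - C)) ^ 2 =
      (∑ k, calM Ms D k ^ 2) - 2 * (∑ k, calM Ms D k * calM Ms C k) + ∑ k, calM Ms C k ^ 2 := by
    rw [vnorm_sq']
    simp only [calM_sub]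
    rw [vsum2_expand_sub]
  -- linearity in C of the two pairings
  have elin1 : ∑ k, calM Ms D k * calM Ms C k =
      c * ∑ k, calM Ms D k * calM Ms (Matrix.vecMulVec v v) k := by
    rw [Finset.mul_sum]
    refine Finset.sum_congr rfl fun k _ => ?_
    have : calM Ms C k = c * calM Ms (Matrix.vecMulVec v v) k := by
      rw [calM_apply', calM_apply', Finset.mul_sum]
      refine Finset.sum_congr rfl fun i _ => ?_
      rw [Finset.mul_sum]
      refine Finset.sum_congr rfl fun j _ => ?_
      rw [hCapp, Matrix.vecMulVec_apply]; ring
    rw [this]; ring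
  have elin2 : ∑ i, ∑ j, D i j * C i j = c * ∑ i, ∑ j, D i j * (v i * v j) := by
    rw [Finset.mul_sum]
    refine Finset.sum_congr rfl fun i _ => ?_
    rw [Finset.mul_sum]
    refine Finset.sum_congr rfl fun j _ => ?_
    rw [hCapp]; ring
  -- combine
  have key : |c * (v ⬝ᵥ ((calMadj Ms (calM Ms D) - D) *ᵥ v))| ≤ δ * t ^ 2 := by
    have h4 : 4 * (c * (v ⬝ᵥ ((calMadj Ms (calM Ms D) - D) *ᵥ v))) =
        (vnorm (calM Ms (D + C)) ^ 2 - frob (D + C) ^ 2) -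
          (vnorm (calM Ms (D - C)) ^ 2 - frob (D - C) ^ 2) := by
      rw [quad, ecal1, ecal2, efrob1, efrob2, elin1, elin2]
      ring
    have b1 : |vnorm (calM Ms (D + C)) ^ 2 - frob (D + C) ^ 2| ≤ δ * frob (D + C) ^ 2 := by
      rw [abs_le]; constructor
      · linarith [hlo1]
      · linarith [hhi1]
    have b2 : |vnorm (calM Ms (D - C)) ^ 2 - frob (D - C) ^ 2| ≤ δ * frob (D - C) ^ 2 := by
      rw [abs_le]; constructor
      · linarith [hlo2]
      · linarith [hhi2]
    have hsum : frob (D + C) ^ 2 + frob (D - C) ^ 2 = 4 * t ^ 2 := by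
      rw [efrob1, efrob2]; ring
    have habs : |4 * (c * (v ⬝ᵥ ((calMadj Ms (calM Ms D) - D) *ᵥ v)))| ≤ 4 * (δ * t ^ 2) := by
      rw [h4]
      calc |(vnorm (calM Ms (D + C)) ^ 2 - frob (D + C) ^ 2) -
          (vnorm (calM Ms (D - C)) ^ 2 - frob (D - C) ^ 2)|
          ≤ |vnorm (calM Ms (D + C)) ^ 2 - frob (D + C) ^ 2| +
            |vnorm (calM Ms (D - C)) ^ 2 - frob (D - C) ^ 2| := abs_sub _ _
        _ ≤ δ * frob (D + C) ^ 2 + δ * frob (D - C) ^ 2 := add_le_add b1 b2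
        _ = 4 * (δ * t ^ 2) := by rw [← mul_add, hsum]; ring
    rw [abs_mul, abs_of_nonneg (by norm_num : (0:ℝ) ≤ 4)] at habs
    linarith
  rw [abs_mul, abs_of_pos hcp, hcdef] at key
  rw [div_mul_eq_mul_div, div_le_iff₀ hbp] at key
  -- key : t * |q| ≤ δ * t ^ 2 * b
  calc |v ⬝ᵥ ((calMadj Ms (calM Ms D) - D) *ᵥ v)|
      = t * |v ⬝ᵥ ((calMadj Ms (calM Ms D) - D) *ᵥ v)| / t := by
        field_simp
    _ ≤ δ * t ^ 2 * b / t := (div_le_div_iff_of_pos_right htp).mpr key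
    _ = (δ * t) * b := by field_simp

lemma rgrad_sub {m r : ℕ} (X g1 g2 : Matrix (Fin m) (Fin r) ℝ) :
    Rgrad X g1 - Rgrad X g2 = Rgrad X (g1 - g2) := by
  unfold Rgrad
  simp only [Matrix.transpose_sub, Matrix.mul_sub, Matrix.sub_mul, smul_sub]
  abel

lemma rgrad_bound {m r : ℕ} (X : Matrix (Fin m) (Fin r) ℝ) (hX : Xᵀ * X = 1)
    (h : Matrix (Fin m) (Fin r) ℝ) : frob (Rgrad X h) ≤ 2 * frob h := by
  have h1 : frob ((1 - X * Xᵀ) * h) ≤ 1 * frob h := frob_mul_le _ zero_le_one (opB_proj hX)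
  have h2 : frob (Xᵀ * h) ≤ 1 * frob h := frob_mul_le _ zero_le_one (opB_stiefel_t hX)
  have h3 : frob (hᵀ * X) = frob (Xᵀ * h) := by
    rw [← frob_transpose (Xᵀ * h), Matrix.transpose_mul, Matrix.transpose_transpose]
  have h4 : frob (Xᵀ * h - hᵀ * X) ≤ frob (Xᵀ * h) + frob (hᵀ * X) := frob_sub_le _ _
  have h5 : frob (X * (Xᵀ * h - hᵀ * X)) ≤ 1 * frob (Xᵀ * h - hᵀ * X) :=
    frob_mul_le _ zero_le_one (opB_stiefel hX)
  have h6 : frob (Rgrad X h) ≤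
      frob ((1 - X * Xᵀ) * h) + frob ((2⁻¹ : ℝ) • (X * (Xᵀ * h - hᵀ * X))) := frob_add_le _ _
  have h7 : frob ((2⁻¹ : ℝ) • (X * (Xᵀ * h - hᵀ * X))) =
      2⁻¹ * frob (X * (Xᵀ * h - hᵀ * X)) := by
    rw [frob_smul]; norm_num
  linarith

end Aux

end

noncomputable section

theorem stmt10 {m r r_A n : ℕ}
    (A : Matrix (Fin m) (Fin m) ℝ) (hAsym : A.IsSymm) (hArank : A.rank ≤ r_A)
    (hAnorm : spec A ≤ 1)
    (Ms : Fin n → Matrix (Fin m) (Fin m) ℝ) (hMs : ∀ i, (Ms i).IsSymm)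
    (δ : ℝ) (hδ0 : 0 ≤ δ) (hδ1 : δ < 1) (hRIP : IsRIP Ms (r + r_A + 1) δ)
    (X : Matrix (Fin m) (Fin r) ℝ) (hX : Stiefel X)
    (Θ : Matrix (Fin r) (Fin r) ℝ) (hΘsym : Θ.IsSymm) (hΘ : spec Θ ≤ 2) :
    frob (Rgrad X ((X * Θ * Xᵀ - A) * X * Θ) -
        Rgrad X (calMadj Ms (calM Ms (X * Θ * Xᵀ - A)) * X * Θ)) ≤ 12 * (m : ℝ) * δ ∧
    frob ((2⁻¹ : ℝ) • (Xᵀ * (X * Θ * Xᵀ - A) * X) -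
        (2⁻¹ : ℝ) • (Xᵀ * calMadj Ms (calM Ms (X * Θ * Xᵀ - A)) * X)) ≤
      (3 / 2) * (m : ℝ) * δ := by
  classical
  have hX' : Xᵀ * X = 1 := hX
  set D := X * Θ * Xᵀ - A with hDdef
  set Q := calMadj Ms (calM Ms D) with hQdef
  -- r ≤ m
  have hrm : r ≤ m := by
    have h1 : (Xᵀ * X).rank = r := by rw [hX', Matrix.rank_one]; simp
    have h2 : (Xᵀ * X).rank ≤ m := by
      calc (Xᵀ * X).rank ≤ Xᵀ.rank := Matrix.rank_mul_le_left _ _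
        _ ≤ m := by simpa using Matrix.rank_le_card_width Xᵀ
    omega
  have hrmR : (r : ℝ) ≤ (m : ℝ) := by exact_mod_cast hrm
  have hsqrm : Real.sqrt r ≤ Real.sqrt m := Real.sqrt_le_sqrt hrmR
  have hsqmm : Real.sqrt m * Real.sqrt m = (m : ℝ) := Real.mul_self_sqrt (Nat.cast_nonneg m)
  have hsq : Real.sqrt m * Real.sqrt r ≤ (m : ℝ) := by
    calc Real.sqrt m * Real.sqrt r ≤ Real.sqrt m * Real.sqrt m :=
          mul_le_mul_of_nonneg_left hsqrm (Real.sqrt_nonneg _)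
      _ = (m : ℝ) := hsqmm
  -- symmetry of D
  have hDsym : D.IsSymm := by
    show Dᵀ = D
    rw [hDdef, Matrix.transpose_sub, hAsym, Matrix.transpose_mul, Matrix.transpose_mul,
      Matrix.transpose_transpose, hΘsym, Matrix.mul_assoc]
  -- symmetry of Q - D
  have hQsym : Qᵀ = Q := by
    rw [hQdef, calMadj, Matrix.transpose_sum]
    refine Finset.sum_congr rfl fun k _ => ?_
    rw [Matrix.transpose_smul, hMs k]
  have hEsym : (Q - D)ᵀ = Q - D := by
    rw [Matrix.transpose_sub, hQsym, hDsym]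
  -- rank of D
  have hDrank : D.rank + 1 ≤ r + r_A + 1 := by
    have h1 : (X * Θ * Xᵀ).rank ≤ r := by
      calc (X * Θ * Xᵀ).rank ≤ (X * Θ).rank := Matrix.rank_mul_le_left _ _
        _ ≤ X.rank := Matrix.rank_mul_le_left _ _
        _ ≤ r := by simpa using Matrix.rank_le_card_width X
    have h2 : D.rank ≤ r + r_A := by
      rw [hDdef, sub_eq_add_neg]
      calc (X * Θ * Xᵀ + -A).rank ≤ (X * Θ * Xᵀ).rank + (-A).rank := Aux.rank_add_le' _ _
        _ ≤ r + r_A := by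
            have := Aux.rank_neg_le A
            omega
    omega
  -- operator bounds
  have hOpX : Aux.OpB X 1 := Aux.opB_stiefel hX'
  have hOpXt : Aux.OpB Xᵀ 1 := Aux.opB_stiefel_t hX'
  have hOpTheta : Aux.OpB Θ 2 := Aux.opB_of_spec (by norm_num) hΘ
  have hOpA : Aux.OpB A 1 := Aux.opB_of_spec zero_le_one hAnorm
  have hfTheta : frob Θ ≤ 2 * Real.sqrt r := Aux.frob_le_of_opB (by norm_num) hOpTheta
  have hfA : frob A ≤ 1 * Real.sqrt m := Aux.frob_le_of_opB zero_le_one hOpA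
  -- frob D ≤ 3 √m
  have hfD : frob D ≤ 3 * Real.sqrt m := by
    have e1 : X * Θ * Xᵀ = X * (Θ * Xᵀ) := Matrix.mul_assoc _ _ _
    have h1 : frob (X * (Θ * Xᵀ)) ≤ 1 * frob (Θ * Xᵀ) :=
      Aux.frob_mul_le _ zero_le_one hOpX
    have e2 : frob (Θ * Xᵀ) = frob (X * Θᵀ) := by
      rw [← Aux.frob_transpose (X * Θᵀ), Matrix.transpose_mul, Matrix.transpose_transpose]
    have h2 : frob (X * Θᵀ) ≤ 1 * frob Θᵀ := Aux.frob_mul_le _ zero_le_one hOpX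
    have e3 : frob Θᵀ = frob Θ := Aux.frob_transpose Θ
    have h3 : frob D ≤ frob (X * Θ * Xᵀ) + frob A := by
      rw [hDdef]; exact Aux.frob_sub_le _ _
    have h4 : frob (X * Θ * Xᵀ) ≤ 2 * Real.sqrt r := by
      rw [e1]
      calc frob (X * (Θ * Xᵀ)) ≤ 1 * frob (Θ * Xᵀ) := h1
        _ = frob (X * Θᵀ) := by rw [one_mul, e2]
        _ ≤ 1 * frob Θᵀ := h2
        _ = frob Θ := by rw [one_mul, e3]
        _ ≤ 2 * Real.sqrt r := hfTheta
    calc frob D ≤ frob (X * Θ * Xᵀ) + frob A := h3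
      _ ≤ 2 * Real.sqrt r + 1 * Real.sqrt m := add_le_add h4 hfA
      _ ≤ 2 * Real.sqrt m + 1 * Real.sqrt m := by linarith [hsqrm]
      _ = 3 * Real.sqrt m := by ring
  -- Rayleigh / RIP bound on Q - D
  have hc0 : 0 ≤ δ * frob D := mul_nonneg hδ0 (Aux.frob_nonneg D)
  have hray : ∀ v : Fin m → ℝ, |v ⬝ᵥ ((Q - D) *ᵥ v)| ≤ (δ * frob D) * (v ⬝ᵥ v) := by
    intro v
    exact Aux.rip_quad_bound hδ0 hRIP D hDsym hDrank v
  have hOpE : Aux.OpB (Q - D) (δ * frob D) := Aux.rayleigh hEsym hc0 hray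
  have hOpE' : Aux.OpB (D - Q) (δ * frob D) := by
    have := Aux.opB_neg hOpE
    rwa [neg_sub] at this
  have hfX : frob X ≤ 1 * Real.sqrt r := Aux.frob_le_of_opB zero_le_one hOpX
  constructor
  · -- X-gradient part
    have hlin : Rgrad X (D * X * Θ) - Rgrad X (Q * X * Θ) =
        Rgrad X (D * X * Θ - Q * X * Θ) := Aux.rgrad_sub X _ _
    have e2 : D * X * Θ - Q * X * Θ = (D - Q) * (X * Θ) := by
      rw [← Matrix.sub_mul, ← Matrix.sub_mul, Matrix.mul_assoc]
    have hb : frob (Rgrad X ((D - Q) * (X * Θ))) ≤ 2 * frob ((D - Q) * (X * Θ)) :=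
      Aux.rgrad_bound X hX' _
    have hfh : frob ((D - Q) * (X * Θ)) ≤ (δ * frob D) * (2 * Real.sqrt r) := by
      have h1 : frob ((D - Q) * (X * Θ)) ≤ (δ * frob D) * frob (X * Θ) :=
        Aux.frob_mul_le _ hc0 hOpE'
      have h2 : frob (X * Θ) ≤ 1 * frob Θ := Aux.frob_mul_le _ zero_le_one hOpX
      calc frob ((D - Q) * (X * Θ)) ≤ (δ * frob D) * frob (X * Θ) := h1
        _ ≤ (δ * frob D) * (2 * Real.sqrt r) := by
            apply mul_le_mul_of_nonneg_left _ hc0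
            linarith [h2, hfTheta]
    have s4 : frob D * Real.sqrt r ≤ 3 * m := by
      have s1 : frob D * Real.sqrt r ≤ (3 * Real.sqrt m) * Real.sqrt r :=
        mul_le_mul_of_nonneg_right hfD (Real.sqrt_nonneg _)
      have s3 : (3 * Real.sqrt m) * Real.sqrt r = 3 * (Real.sqrt m * Real.sqrt r) := by ring
      linarith [hsq]
    calc frob (Rgrad X (D * X * Θ) - Rgrad X (Q * X * Θ))
        = frob (Rgrad X ((D - Q) * (X * Θ))) := by rw [hlin, e2]
      _ ≤ 2 * frob ((D - Q) * (X * Θ)) := hb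
      _ ≤ 2 * ((δ * frob D) * (2 * Real.sqrt r)) := by linarith [hfh]
      _ = 4 * δ * (frob D * Real.sqrt r) := by ring
      _ ≤ 4 * δ * (3 * m) := mul_le_mul_of_nonneg_left s4 (by linarith)
      _ = 12 * m * δ := by ring
  · -- Θ-gradient part
    have e1 : (2⁻¹ : ℝ) • (Xᵀ * D * X) - (2⁻¹ : ℝ) • (Xᵀ * Q * X)
        = (2⁻¹ : ℝ) • (Xᵀ * ((D - Q) * X)) := by
      rw [← smul_sub]
      congr 1
      rw [← Matrix.sub_mul, ← Matrix.mul_sub, Matrix.mul_assoc]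
    have h1 : frob (Xᵀ * ((D - Q) * X)) ≤ 1 * frob ((D - Q) * X) :=
      Aux.frob_mul_le _ zero_le_one hOpXt
    have h2 : frob ((D - Q) * X) ≤ (δ * frob D) * frob X :=
      Aux.frob_mul_le _ hc0 hOpE'
    have h3 : frob ((D - Q) * X) ≤ (δ * frob D) * Real.sqrt r := by
      calc frob ((D - Q) * X) ≤ (δ * frob D) * frob X := h2
        _ ≤ (δ * frob D) * Real.sqrt r := by
            apply mul_le_mul_of_nonneg_left _ hc0
            linarith [hfX]
    have s4 : frob D * Real.sqrt r ≤ 3 * m := by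
      have s1 : frob D * Real.sqrt r ≤ (3 * Real.sqrt m) * Real.sqrt r :=
        mul_le_mul_of_nonneg_right hfD (Real.sqrt_nonneg _)
      have s3 : (3 * Real.sqrt m) * Real.sqrt r = 3 * (Real.sqrt m * Real.sqrt r) := by ring
      linarith [hsq]
    calc frob ((2⁻¹ : ℝ) • (Xᵀ * D * X) - (2⁻¹ : ℝ) • (Xᵀ * Q * X))
        = frob ((2⁻¹ : ℝ) • (Xᵀ * ((D - Q) * X))) := by rw [e1]
      _ = 2⁻¹ * frob (Xᵀ * ((D - Q) * X)) := by rw [Aux.frob_smul]; norm_num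
      _ ≤ 2⁻¹ * ((δ * frob D) * Real.sqrt r) := by linarith [h1, h3]
      _ = 2⁻¹ * δ * (frob D * Real.sqrt r) := by ring
      _ ≤ 2⁻¹ * δ * (3 * m) := mul_le_mul_of_nonneg_left s4 (by linarith)
      _ = (3 / 2) * (m : ℝ) * δ := by ring


end
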